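/- If an endofunctor F on C has a final coalgebra, then the constant sheaf functor Δ : C → Sh_C(α) takes the final F-coalgebra to a final coalgebra for the pointwise extension F^ on Sh_C(α). -/

import Mathlib

open CategoryTheory CategoryTheory.Limits

universe w v u

/-- The successor ordinals `≤ α`: the canonical base for the Alexandrov topology of
the ordinal `α`.  `C`-valued sheaves on the Alexandrov topology of `α` are
equivalently presheaves on this base, and under this presentation the pointwise
extension `F^` of an endofunctor `F` of `C` is postcomposition with `F`. -/
def SuccStage (α : Ordinal.{w}) : Type (w + 1) :=
  {β : Ordinal.{w} // β ≤ α ∧ ∃ γ, β = γ + 1}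

instance (α : Ordinal.{w}) : Preorder (SuccStage α) :=
  Subtype.preorder _

/-- If an endofunctor `F` on `C` has a final coalgebra, then the constant sheaf
functor `Δ : C ⥤ Sh_C(α)` takes it to a final coalgebra for the pointwise extension
`F^` of `F`. -/
theorem const_preserves_final_coalgebra
    {C : Type u} [Category.{v} C] (α : Ordinal.{w}) (hα : Order.IsSuccLimit α)
    (F : C ⥤ C)
    (c : Endofunctor.Coalgebra F) (hc : IsTerminal c) :
    Nonempty (IsTerminal
      (⟨(Functor.const (SuccStage α)ᵒᵖ).obj c.V,
        (Functor.const (SuccStage α)ᵒᵖ).map c.str ≫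
          (Functor.constComp (SuccStage α)ᵒᵖ c.V F).inv⟩ :
        Endofunctor.Coalgebra ((Functor.whiskeringRight (SuccStage α)ᵒᵖ C C).obj F))) := by
  -- pointwise coalgebra of a whiskered coalgebra
  let pt : ∀ (A : Endofunctor.Coalgebra ((Functor.whiskeringRight (SuccStage α)ᵒᵖ C C).obj F))
      (β : (SuccStage α)ᵒᵖ), Endofunctor.Coalgebra F :=
    fun A β => ⟨A.V.obj β, A.str.app β⟩
  refine ⟨IsTerminal.ofUniqueHom (fun A => ?_) (fun A m => ?_)⟩
  · refine ⟨{ app := fun β => (hc.from (pt A β)).f,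
              naturality := fun β β' g => ?_ }, ?_⟩
    · have h1 : (hc.from (pt A β)) =
          (⟨A.V.map g, (A.str.naturality g).symm⟩ :
            pt A β ⟶ pt A β') ≫ hc.from (pt A β') := hc.hom_ext _ _
      have := congrArg Endofunctor.Coalgebra.Hom.f h1
      simp only [Endofunctor.Coalgebra.comp_eq_comp] at this ⊢
      simp [this, pt]
      rfl
    · ext β
      have := (hc.from (pt A β)).h
      simpa [pt] using this
  · ext β
    exact congrArg Endofunctor.Coalgebra.Hom.f
      (hc.hom_ext (⟨m.f.app β, by
        have := congrFun (congrArg NatTrans.app m.h) β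
        simpa [pt] using this⟩ :
        pt A β ⟶ c) (hc.from (pt A β)))
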